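/- arXiv:1208.0457 — 6 statements merged into one kernel-verified Lean document; each statement's English description precedes it below -/
import Mathlib

section
/- Let F ∈ ℚ[t] be monic of degree d with nonzero constant term, A ∈ ℚ[t] coprime to F, and γ ∈ ℤ. Then there exists a unique Laurent polynomial B ∈ ℚ[t,t⁻¹] supported on exponents in the interval [γ, γ+d−1] such that A·B ≡ 1 modulo F. -/
open Polynomial LaurentPolynomial

namespace InvModAux

lemma mul_T_apply (f : LaurentPolynomial ℚ) (n k : ℤ) :
    (f * T n : LaurentPolynomial ℚ).coeff k = f.coeff (k - n) := by
  rw [show (T n : LaurentPolynomial ℚ) = AddMonoidAlgebra.single n 1 from rfl]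
  simpa [sub_eq_add_neg] using AddMonoidAlgebra.coeff_mul_single_apply f (1:ℚ) n k

lemma toLaurent_apply_coe (p : Polynomial ℚ) (k : ℕ) :
    (Polynomial.toLaurent p).coeff (k : ℤ) = p.coeff k := by
  rw [LaurentPolynomial.coeff_toLaurent]
  exact Finsupp.mapDomain_apply Nat.castEmbedding.injective _ _

lemma cancel_T {f g : LaurentPolynomial ℚ} (n : ℤ) (h : f * T n = g * T n) :
    f = g := by
  have := congrArg (· * T (-n)) h
  simpa [mul_T_assoc] using this

lemma exists_poly_of_nonneg_support (f : LaurentPolynomial ℚ)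
    (hf : ∀ k : ℤ, k < 0 → f.coeff k = 0) : ∃ p : Polynomial ℚ, Polynomial.toLaurent p = f := by
  obtain ⟨n, q, hq⟩ := f.exists_T_pow
  have hdvd : (Polynomial.X : Polynomial ℚ) ^ n ∣ q := by
    rw [Polynomial.X_pow_dvd_iff]
    intro k hk
    have h1 : (Polynomial.toLaurent q).coeff (k : ℤ) = (f * T (n : ℤ) : LaurentPolynomial ℚ).coeff (k : ℤ) := by
      rw [hq]
    rw [toLaurent_apply_coe, mul_T_apply] at h1
    rw [h1]
    have hkn : (k : ℤ) < (n : ℤ) := by exact_mod_cast hk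
    exact hf ((k : ℤ) - (n : ℤ)) (by omega)
  obtain ⟨p, hp⟩ := hdvd
  refine ⟨p, ?_⟩
  have h2 : Polynomial.toLaurent p * T (n : ℤ) = f * T (n : ℤ) := by
    rw [← hq, hp, map_mul, Polynomial.toLaurent_X_pow, mul_comm]
  exact cancel_T _ h2

lemma isCoprime_X (F : Polynomial ℚ) (h0 : F.coeff 0 ≠ 0) :
    IsCoprime (Polynomial.X) F := by
  refine ⟨-(Polynomial.C (F.coeff 0)⁻¹ * F.divX), Polynomial.C (F.coeff 0)⁻¹, ?_⟩
  have h : F - Polynomial.X * F.divX = Polynomial.C (F.coeff 0) := by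
    linear_combination -F.X_mul_divX_add
  calc -(Polynomial.C (F.coeff 0)⁻¹ * F.divX) * Polynomial.X
        + Polynomial.C (F.coeff 0)⁻¹ * F
      = Polynomial.C (F.coeff 0)⁻¹ * (F - Polynomial.X * F.divX) := by ring
    _ = Polynomial.C (F.coeff 0)⁻¹ * Polynomial.C (F.coeff 0) := by rw [h]
    _ = 1 := by rw [← Polynomial.C_mul, inv_mul_cancel₀ h0, Polynomial.C_1]

lemma dvd_of_dvd_mul_T {x y : LaurentPolynomial ℚ} (n : ℤ) (h : y ∣ x * T n) : y ∣ x := by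
  obtain ⟨L, hL⟩ := h
  have hLT : L * T (-n) * T n = L := by rw [mul_T_assoc]; simp
  refine ⟨L * T (-n), cancel_T n ?_⟩
  rw [hL]
  exact (by rw [mul_assoc, hLT] : y * (L * T (-n)) * T n = y * L).symm

lemma dvd_of_toLaurent_dvd {F q : Polynomial ℚ} (hX : IsCoprime (Polynomial.X) F)
    (h : Polynomial.toLaurent F ∣ Polynomial.toLaurent q) : F ∣ q := by
  obtain ⟨L, hL⟩ := h
  obtain ⟨n, L', hL'⟩ := L.exists_T_pow
  have h2 : q * Polynomial.X ^ n = F * L' := by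
    apply Polynomial.toLaurent_injective
    rw [map_mul, map_mul, Polynomial.toLaurent_X_pow, hL', hL, mul_assoc]
  have h3 : F ∣ q * Polynomial.X ^ n := ⟨L', h2⟩
  exact (hX.pow_left.symm).dvd_of_dvd_mul_right h3

end InvModAux

open InvModAux

/-- Let `F ∈ ℚ[t]` be monic of degree `d` with nonzero constant term, `A`
coprime to `F`, and `γ ∈ ℤ`. Then there is a unique Laurent polynomial `B`
supported on exponents in `[γ, γ+d-1]` with `A·B ≡ 1 (mod F)`. -/
theorem invMod_exists_unique (F A : Polynomial ℚ) (d : ℕ)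
    (hdeg : F.natDegree = d) (hmonic : F.Monic) (h0 : F.coeff 0 ≠ 0)
    (hcop : IsCoprime A F) (γ : ℤ) :
    ∃! B : LaurentPolynomial ℚ,
      (B.coeff.support : Set ℤ) ⊆ Set.Icc γ (γ + d - 1) ∧
      Polynomial.toLaurent F ∣ (Polynomial.toLaurent A * B - 1) := by
  have hXF : IsCoprime (Polynomial.X) F := isCoprime_X F h0
  set n : ℕ := (-γ).toNat with hn
  have hγn : 0 ≤ γ + n := by
    have : -γ ≤ ((-γ).toNat : ℤ) := Int.self_le_toNat _
    omega
  set a : ℕ := (γ + n).toNat with hadef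
  have ha : (a : ℤ) = γ + n := Int.toNat_of_nonneg hγn
  have hcop2 : IsCoprime (A * Polynomial.X ^ a) F := hcop.mul_left hXF.pow_left
  obtain ⟨u, v, huv⟩ := hcop2
  set P : Polynomial ℚ := (u * Polynomial.X ^ n) %ₘ F with hP
  set B : LaurentPolynomial ℚ := Polynomial.toLaurent P * T γ with hB
  have hFne : F ≠ 0 := hmonic.ne_zero
  have hdegF : F.degree = (d : ℕ) := by rw [Polynomial.degree_eq_natDegree hFne, hdeg]
  -- support of B
  have hBsupp : (B.coeff.support : Set ℤ) ⊆ Set.Icc γ (γ + d - 1) := by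
    intro k hk
    simp only [Finset.coe_subset, Finset.mem_coe] at hk
    have hk' : B.coeff k ≠ 0 := Finsupp.mem_support_iff.mp hk
    rw [hB, mul_T_apply] at hk'
    have hkγ : k - γ ∈ (Polynomial.toLaurent P).coeff.support := Finsupp.mem_support_iff.mpr hk'
    rw [LaurentPolynomial.toLaurent_support] at hkγ
    obtain ⟨j, hj, hjk⟩ := Finset.mem_map.mp hkγ
    have hjd : j < d := by
      have h1 : (j : WithBot ℕ) ≤ P.degree := Polynomial.le_degree_of_mem_supp j hj
      have h2 : P.degree < F.degree := Polynomial.degree_modByMonic_lt _ hmonic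
      rw [hdegF] at h2
      exact_mod_cast lt_of_le_of_lt h1 h2
    have : (j : ℤ) = k - γ := hjk
    constructor <;> omega
  -- divisibility for B
  have hmod := Polynomial.modByMonic_add_div (u * Polynomial.X ^ n) F
  have hFdvd : F ∣ A * Polynomial.X ^ a * P - Polynomial.X ^ n := by
    refine ⟨-(A * Polynomial.X ^ a * ((u * Polynomial.X ^ n) /ₘ F)) - v * Polynomial.X ^ n, ?_⟩
    linear_combination (A * Polynomial.X ^ a) * hmod + (Polynomial.X ^ n : Polynomial ℚ) * huv
  have hT : (T γ * T (n : ℤ) : LaurentPolynomial ℚ) = T (a : ℤ) := by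
    rw [← T_add, ha]
  have key : (Polynomial.toLaurent A * B - 1) * T (n : ℤ)
      = Polynomial.toLaurent (A * Polynomial.X ^ a * P - Polynomial.X ^ n) := by
    rw [map_sub, map_mul, map_mul, Polynomial.toLaurent_X_pow, Polynomial.toLaurent_X_pow,
      ← hT, hB]
    ring
  have hBdvd : Polynomial.toLaurent F ∣ (Polynomial.toLaurent A * B - 1) := by
    have h1 : Polynomial.toLaurent F ∣ (Polynomial.toLaurent A * B - 1) * T (n : ℤ) := by
      rw [key]; exact map_dvd _ hFdvd
    exact dvd_of_dvd_mul_T _ h1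
  refine ⟨B, ⟨hBsupp, hBdvd⟩, ?_⟩
  -- uniqueness
  rintro B' ⟨hsupp', hdvd'⟩
  set D : LaurentPolynomial ℚ := B' - B with hD
  have hDsupp : ∀ k : ℤ, D.coeff k ≠ 0 → γ ≤ k ∧ k ≤ γ + d - 1 := by
    intro k hk
    have : B'.coeff k ≠ 0 ∨ B.coeff k ≠ 0 := by
      by_contra hcon
      push_neg at hcon
      apply hk
      show (B' - B).coeff k = 0
      rw [AddMonoidAlgebra.coeff_sub, Finsupp.sub_apply, hcon.1, hcon.2, sub_zero]
    rcases this with h | h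
    · have := hsupp' (Finset.mem_coe.mpr (Finsupp.mem_support_iff.mpr h))
      exact ⟨this.1, this.2⟩
    · have := hBsupp (Finset.mem_coe.mpr (Finsupp.mem_support_iff.mpr h))
      exact ⟨this.1, this.2⟩
  have hDdvd : Polynomial.toLaurent F ∣ Polynomial.toLaurent A * D := by
    have := dvd_sub hdvd' hBdvd
    have h2 : (Polynomial.toLaurent A * B' - 1) - (Polynomial.toLaurent A * B - 1)
        = Polynomial.toLaurent A * D := by rw [hD]; ring
    rwa [h2] at this
  -- D * T n is a polynomial
  have hE : ∀ k : ℤ, k < 0 → (D * T (n : ℤ) : LaurentPolynomial ℚ).coeff k = 0 := by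
    intro k hk
    rw [mul_T_apply]
    by_contra hne
    have := hDsupp _ hne
    omega
  obtain ⟨Q, hQ⟩ := exists_poly_of_nonneg_support _ hE
  have hFQ : F ∣ Q := by
    have h1 : Polynomial.toLaurent F ∣ Polynomial.toLaurent (A * Q) := by
      rw [map_mul, hQ]
      obtain ⟨L, hL⟩ := hDdvd
      exact ⟨L * T (n : ℤ), by rw [← mul_assoc, hL, mul_assoc]⟩
    have h2 : F ∣ A * Q := dvd_of_toLaurent_dvd hXF h1
    exact (hcop.symm).dvd_of_dvd_mul_left h2
  have hQ0 : Q = 0 := by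
    by_contra hQne
    obtain ⟨S, hS⟩ := hFQ
    have hSne : S ≠ 0 := by rintro rfl; simp at hS; exact hQne hS
    have hndQ : Q.natDegree = d + S.natDegree := by
      rw [hS, Polynomial.natDegree_mul hFne hSne, hdeg]
    have htF : F.natTrailingDegree = 0 :=
      Polynomial.natTrailingDegree_eq_zero.mpr (Or.inr h0)
    have htQ : Q.natTrailingDegree = S.natTrailingDegree := by
      rw [hS, Polynomial.natTrailingDegree_mul hFne hSne, htF, zero_add]
    have hQsupp : ∀ j : ℕ, j ∈ Q.support → γ + n ≤ (j : ℤ) ∧ (j : ℤ) ≤ γ + n + d - 1 := by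
      intro j hj
      have : (j : ℤ) ∈ (Polynomial.toLaurent Q).coeff.support := by
        rw [LaurentPolynomial.toLaurent_support]
        exact Finset.mem_map.mpr ⟨j, hj, rfl⟩
      have hval : (Polynomial.toLaurent Q).coeff (j : ℤ) ≠ 0 := Finsupp.mem_support_iff.mp this
      rw [hQ, mul_T_apply] at hval
      have := hDsupp _ hval
      omega
    have h1 := hQsupp _ (Polynomial.natDegree_mem_support_of_nonzero hQne)
    have h2 := hQsupp _ (Polynomial.natTrailingDegree_mem_support_of_nonzero hQne)
    have h3 : S.natTrailingDegree ≤ S.natDegree := Polynomial.natTrailingDegree_le_natDegree S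
    omega
  have hDzero : D = 0 := by
    have h1 : D * T (n : ℤ) = 0 * T (n : ℤ) := by rw [← hQ, hQ0, map_zero, zero_mul]
    simpa using cancel_T _ h1
  have : B' = B := by
    have := sub_eq_zero.mp hDzero
    exact this
  exact this
end

section
/- Let 0 < a < r be coprime integers and b the inverse of a modulo r with 0 < b < r. Then the inverse of (1−t^a)/(1−t) modulo (1−t^r)/(1−t) is given by ∑_{i=0}^{b−1} t^{a i}, i.e. ((1−t^a)/(1−t)) · (∑_{i=0}^{b−1} t^{a i}) ≡ 1 modulo (1−t^r)/(1−t). -/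
open Polynomial in
lemma geom_sum_mul_geom_sum_pow (m n : ℕ) :
    (∑ i ∈ Finset.range m, (X : Polynomial ℚ) ^ i) *
      (∑ j ∈ Finset.range n, X ^ (m * j)) =
    ∑ i ∈ Finset.range (m * n), X ^ i := by
  have hX : (X : Polynomial ℚ) - 1 ≠ 0 := by
    intro h
    have := congrArg (Polynomial.eval 0) h
    simp at this
  apply mul_left_cancel₀ hX
  have h1 : ∀ k, ((X : Polynomial ℚ) - 1) * ∑ i ∈ Finset.range k, X ^ i = X ^ k - 1 :=
    fun k => by rw [mul_comm, geom_sum_mul]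
  rw [← mul_assoc, h1, h1]
  simp_rw [pow_mul]
  rw [mul_comm ((X : Polynomial ℚ) ^ m - 1), geom_sum_mul, ← pow_mul]

open Polynomial in
/-- Let `0 < a < r` be coprime and `b` the inverse of `a` mod `r` with `0 < b < r`.
Then `((1−t^a)/(1−t)) · (∑_{i<b} t^{a i}) ≡ 1` modulo `(1−t^r)/(1−t)`. -/
theorem one_dim_ice_cream_inverse (a r b : ℕ) (ha : 0 < a) (har : a < r)
    (hcop : Nat.Coprime a r) (hb : 0 < b) (hbr : b < r)
    (hab : a * b ≡ 1 [MOD r]) :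
    (∑ i ∈ Finset.range r, (X : Polynomial ℚ) ^ i) ∣
      ((∑ i ∈ Finset.range a, (X : Polynomial ℚ) ^ i) *
        (∑ i ∈ Finset.range b, X ^ (a * i)) - 1) := by
  obtain ⟨k, hk⟩ : r ∣ a * b - 1 :=
    (Nat.modEq_iff_dvd' (Nat.one_le_iff_ne_zero.mpr (by positivity))).mp hab.symm
  have h1 : 1 ≤ a * b := Nat.one_le_iff_ne_zero.mpr (by positivity)
  have hab1 : a * b = r * k + 1 := by omega
  rw [geom_sum_mul_geom_sum_pow, hab1, Finset.sum_range_succ']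
  simp only [pow_succ, pow_zero, add_sub_cancel_right, ← Finset.sum_mul]
  rw [← geom_sum_mul_geom_sum_pow r k]
  exact ⟨(∑ j ∈ Finset.range k, X ^ (r * j)) * X, by ring⟩
end

section
/- With σᵢ the generalized Dedekind sums of type (1/r)(a₁,…,aₙ), suppose β is a common divisor of r and of some aⱼ. Then for every integer d, the sum ∑ σᵢ over all i in {0,…,r−1} with i ≡ d (mod β) equals zero. -/
open Finset in
/-- Generalized Dedekind sums of type `(1/r)(a₁,…,aₙ)`: if `β` divides `r` and
some `aⱼ`, then for every `d` the sum of the `σᵢ` over `i ≡ d (mod β)` vanishes. -/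
theorem dedekind_sums_coset_sum_zero (r n : ℕ) (hr : 0 < r)
    (a : Fin n → ℕ) (ha : ∀ j, 0 < a j)
    (ζ : ℂ) (hζ : ζ = Complex.exp (2 * Real.pi * Complex.I / r))
    (σ : ℕ → ℂ)
    (hσ : ∀ i, σ i = (1 / (r : ℂ)) *
      ∑ k ∈ (Finset.range r).filter (fun k => ∀ j, ζ ^ (k * a j) ≠ 1),
        ζ ^ (k * i) / ∏ j, (1 - ζ ^ (k * a j)))
    (β : ℕ) (hβr : β ∣ r) (hβa : ∃ j, β ∣ a j) :
    ∀ d : ℕ, ∑ i ∈ (Finset.range r).filter (fun i => i % β = d % β), σ i = 0 := by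
  intro d
  have hβ : 0 < β := Nat.pos_of_dvd_of_pos hβr hr
  have hprim : IsPrimitiveRoot ζ r := hζ ▸ Complex.isPrimitiveRoot_exp r hr.ne'
  obtain ⟨j0, m, hm⟩ : ∃ j m, a j = β * m := by
    obtain ⟨j, c, hc⟩ := hβa; exact ⟨j, c, hc⟩
  simp_rw [hσ]
  rw [← Finset.mul_sum, Finset.sum_comm]
  have key : ∀ k ∈ (Finset.range r).filter (fun k => ∀ j, ζ ^ (k * a j) ≠ 1),
      ∑ i ∈ (Finset.range r).filter (fun i => i % β = d % β),
        ζ ^ (k * i) / ∏ j, (1 - ζ ^ (k * a j)) = 0 := by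
    intro k hk
    rw [Finset.mem_filter] at hk
    have hkβ : ζ ^ (k * β) ≠ 1 := by
      intro h
      apply hk.2 j0
      have : ζ ^ (k * a j0) = (ζ ^ (k * β)) ^ m := by
        rw [← pow_mul, hm, mul_assoc]
      rw [this, h, one_pow]
    rw [← Finset.sum_div]
    have hset : (Finset.range r).filter (fun i => i % β = d % β)
        = (Finset.range (r / β)).image (fun t => d % β + β * t) := by
      ext i
      simp only [Finset.mem_filter, Finset.mem_range, Finset.mem_image]
      constructor
      · rintro ⟨hir, hiβ⟩
        refine ⟨i / β, ?_, ?_⟩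
        · exact Nat.div_lt_div_of_lt_of_dvd hβr hir
        · rw [← hiβ]; exact (Nat.mod_add_div i β)
      · rintro ⟨t, ht, rfl⟩
        have hcd : d % β < β := Nat.mod_lt _ hβ
        have hrd : β * (r / β) = r := Nat.mul_div_cancel' hβr
        constructor
        · have : β * t + β ≤ β * (r / β) := by
            have : t + 1 ≤ r / β := ht
            calc β * t + β = β * (t + 1) := by ring
              _ ≤ β * (r / β) := Nat.mul_le_mul_left β this
          omega
        · simp [Nat.add_mul_mod_self_left]
    have hsum : ∑ i ∈ (Finset.range r).filter (fun i => i % β = d % β), ζ ^ (k * i) = 0 := by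
      rw [hset, Finset.sum_image (by intro x _ y _ h; exact Nat.eq_of_mul_eq_mul_left hβ (Nat.add_left_cancel h))]
      have : ∀ t, ζ ^ (k * (d % β + β * t)) = ζ ^ (k * (d % β)) * (ζ ^ (k * β)) ^ t := by
        intro t
        rw [← pow_mul, ← pow_add]; ring_nf
      simp_rw [this]
      rw [← Finset.mul_sum, geom_sum_eq hkβ]
      have : (ζ ^ (k * β)) ^ (r / β) = 1 := by
        rw [← pow_mul, mul_assoc, Nat.mul_div_cancel' hβr, mul_comm, pow_mul,
          hprim.pow_eq_one, one_pow]
      rw [this, sub_self, zero_div, mul_zero]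
    rw [hsum, zero_div]
  rw [Finset.sum_congr rfl key, Finset.sum_const_zero, mul_zero]
end

section
/- Let r ≥ 2 and a₁,…,aₙ be positive integers, A = ∏ⱼ(1−t^{aⱼ}), h = gcd(1−t^r, A) in ℚ[t], and F = (1−t^r)/h. Let Δ(t) = ∑_{i=1}^{r} σ_{r−i} t^i be the Dedekind sum polynomial, where σᵢ are the generalized Dedekind sums of type (1/r)(a₁,…,aₙ). Then A(t)·Δ(t) ≡ 1 modulo F in ℚ[t]. -/
open Polynomial Finset in
/-- Buckley's theorem: with `A = ∏ⱼ(1−t^{aⱼ})`, `h = gcd(1−t^r, A)`,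
`F = (1−t^r)/h` and the Dedekind sum polynomial `Δ = ∑_{i=1}^r σ_{r−i} tⁱ`,
one has `A·Δ ≡ 1 (mod F)`. -/
theorem dedekind_polynomial_is_inverse (r n : ℕ) (hr : 2 ≤ r)
    (a : Fin n → ℕ) (ha : ∀ j, 0 < a j)
    (ζ : ℂ) (hζ : ζ = Complex.exp (2 * Real.pi * Complex.I / r))
    (σ : ℕ → ℂ)
    (hσ : ∀ i, σ i = (1 / (r : ℂ)) *
      ∑ k ∈ (Finset.range r).filter (fun k => ∀ j, ζ ^ (k * a j) ≠ 1),
        ζ ^ (k * i) / ∏ j, (1 - ζ ^ (k * a j)))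
    (A h F Δ : Polynomial ℂ)
    (hA : A = ∏ j, (1 - X ^ (a j)))
    (hh : h = EuclideanDomain.gcd (1 - X ^ r) A)
    (hF : F = (1 - X ^ r) / h)
    (hΔ : Δ = ∑ i ∈ Finset.Icc 1 r, C (σ (r - i)) * X ^ i) :
    F ∣ (A * Δ - 1) := by
  classical
  have hrpos : 0 < r := by omega
  have hrC : (r : ℂ) ≠ 0 := Nat.cast_ne_zero.mpr (by omega)
  have hprim : IsPrimitiveRoot ζ r := hζ ▸ Complex.isPrimitiveRoot_exp r (by omega)
  have hζ0 : ζ ≠ 0 := hprim.ne_zero (by omega)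
  have hζr : ζ ^ r = 1 := hprim.pow_eq_one
  set S : Finset ℕ := (Finset.range r).filter (fun k => ∀ j, ζ ^ (k * a j) ≠ 1) with hS
  have hpowr : ∀ m : ℕ, ζ ^ (m * r) = 1 := by
    intro m
    rw [mul_comm, pow_mul, hζr, one_pow]
  -- nonvanishing of the denominators
  have hAm0 : ∀ k ∈ S, (∏ j, (1 - ζ ^ (k * a j))) ≠ 0 := by
    intro k hk
    have hcond := (Finset.mem_filter.mp hk).2
    exact Finset.prod_ne_zero_iff.mpr fun j _ => sub_ne_zero.mpr fun he => hcond j he.symm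
  -- evaluation of A
  have hevalA : ∀ k : ℕ, A.eval (ζ ^ k) = ∏ j, (1 - ζ ^ (k * a j)) := by
    intro k
    rw [hA, eval_prod]
    exact Finset.prod_congr rfl fun j _ => by rw [eval_sub, eval_one, eval_pow, eval_X, pow_mul]
  -- evaluation of Δ at a good root
  have hevalΔ : ∀ k ∈ S, Δ.eval (ζ ^ k) = (∏ j, (1 - ζ ^ (k * a j)))⁻¹ := by
    intro k hk
    have hkr : k < r := Finset.mem_range.mp (Finset.mem_of_mem_filter k hk)
    rw [hΔ, eval_finset_sum]
    simp only [eval_mul, eval_C, eval_pow, eval_X]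
    have key : ∀ i ∈ Finset.Icc 1 r, σ (r - i) * (ζ ^ k) ^ i
        = ∑ m ∈ S, (1 / (r : ℂ)) * (((ζ ^ m)⁻¹ * ζ ^ k) ^ i / ∏ j, (1 - ζ ^ (m * a j))) := by
      intro i hi
      obtain ⟨hi1, hir⟩ := Finset.mem_Icc.mp hi
      rw [hσ (r - i), mul_assoc, Finset.sum_mul, Finset.mul_sum]
      refine Finset.sum_congr rfl fun m hm => ?_
      have hz : ζ ^ (m * (r - i)) = ((ζ ^ m)⁻¹) ^ i := by
        have h1 : ζ ^ (m * (r - i)) * (ζ ^ m) ^ i = 1 := by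
          rw [← pow_mul, ← pow_add, ← Nat.mul_add, Nat.sub_add_cancel hir, hpowr]
        rw [inv_pow]
        exact eq_inv_of_mul_eq_one_right (by rw [mul_comm] at h1; exact h1)
      rw [hz, mul_pow]
      ring
    rw [Finset.sum_congr rfl key, Finset.sum_comm]
    have hmain : ∀ m ∈ S,
        (∑ i ∈ Finset.Icc 1 r,
          (1 / (r : ℂ)) * (((ζ ^ m)⁻¹ * ζ ^ k) ^ i / ∏ j, (1 - ζ ^ (m * a j))))
        = if m = k then (∏ j, (1 - ζ ^ (k * a j)))⁻¹ else 0 := by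
      intro m hm
      have hmr : m < r := Finset.mem_range.mp (Finset.mem_of_mem_filter m hm)
      have hgeo : (∑ i ∈ Finset.Icc 1 r, ((ζ ^ m)⁻¹ * ζ ^ k) ^ i)
          = if m = k then (r : ℂ) else 0 := by
        by_cases hmk : m = k
        · subst hmk
          rw [inv_mul_cancel₀ (pow_ne_zero _ hζ0), if_pos rfl]
          simp [Nat.card_Icc]
        · set w : ℂ := (ζ ^ m)⁻¹ * ζ ^ k with hw
          have hw1 : w ≠ 1 := by
            intro hww
            refine hmk (hprim.pow_inj hmr hkr ?_)
            have := congrArg (fun z => ζ ^ m * z) hww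
            simpa [hw, mul_inv_cancel_left₀ (pow_ne_zero m hζ0)] using this.symm
          have hwr : w ^ r = 1 := by
            rw [hw, mul_pow, inv_pow, ← pow_mul, ← pow_mul, mul_comm m r, mul_comm k r,
              pow_mul, pow_mul, hζr, one_pow, one_pow, inv_one, one_mul]
          have hre : ∑ i ∈ Finset.Icc 1 r, w ^ i = w * ∑ i ∈ Finset.range r, w ^ i := by
            rw [← Finset.Ico_add_one_right_eq_Icc, Finset.sum_Ico_eq_sum_range]
            simp [pow_add, Finset.mul_sum]
          rw [hre, geom_sum_eq hw1, hwr, if_neg hmk]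
          simp
      rw [← Finset.mul_sum, ← Finset.sum_div, hgeo]
      by_cases hmk : m = k
      · subst hmk
        rw [if_pos rfl, if_pos rfl]
        have hA0 := hAm0 m hm
        field_simp
      · rw [if_neg hmk, if_neg hmk]
        simp
    rw [Finset.sum_congr rfl hmain, Finset.sum_ite_eq' S k _, if_pos hk]
  -- roots of A*Δ - 1
  have hroot : ∀ k ∈ S, (A * Δ - 1).eval (ζ ^ k) = 0 := by
    intro k hk
    rw [eval_sub, eval_mul, eval_one, hevalA k, hevalΔ k hk,
      mul_inv_cancel₀ (hAm0 k hk), sub_self]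
  -- G divides A*Δ - 1
  set G : Polynomial ℂ := ∏ k ∈ S, (X - C (ζ ^ k)) with hG
  have hGdvd : G ∣ A * Δ - 1 := by
    refine Finset.prod_dvd_of_coprime ?_ fun k hk => dvd_iff_isRoot.mpr (hroot k hk)
    intro x hx y hy hxy
    exact pairwise_coprime_X_sub_C Function.injective_id
      (fun he : ζ ^ x = ζ ^ y => hxy (hprim.pow_inj (Finset.mem_range.mp
        (Finset.mem_of_mem_filter x hx)) (Finset.mem_range.mp
        (Finset.mem_of_mem_filter y hy)) he))
  -- the factorization of 1 - X^r
  set P : Polynomial ℂ := 1 - X ^ r with hP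
  set B : Polynomial ℂ :=
    ∏ k ∈ (Finset.range r).filter (fun k => ¬ ∀ j, ζ ^ (k * a j) ≠ 1), (X - C (ζ ^ k)) with hB
  have hsplit : P = -(G * B) := by
    have h1 : (X : Polynomial ℂ) ^ r - 1 = ∏ k ∈ Finset.range r, (X - C (ζ ^ k)) := by
      simpa using X_pow_sub_C_eq_prod hprim hrpos (one_pow r)
    have h2 : (∏ k ∈ Finset.range r, (X - C (ζ ^ k) : Polynomial ℂ)) = G * B := by
      rw [hG, hB, Finset.prod_filter_mul_prod_filter_not]
    rw [hP, ← h2, ← h1]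
    ring
  have hPne : P ≠ 0 := by
    intro h0
    have h1 : P.coeff r = 0 := by rw [h0]; simp
    rw [hP] at h1
    simp only [coeff_sub, coeff_one, coeff_X_pow, if_neg (by omega : ¬ r = 0), if_pos rfl] at h1
    norm_num at h1
  have hPsq : Squarefree P := by
    have hs : Squarefree ((X : Polynomial ℂ) ^ r - 1) :=
      (X_pow_sub_one_separable_iff.2 hrC).squarefree
    intro x hx
    refine hs x ?_
    rwa [show ((X : Polynomial ℂ) ^ r - 1) = -P by rw [hP]; ring, dvd_neg]
  have hhdvdP : h ∣ P := hh ▸ EuclideanDomain.gcd_dvd_left _ _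
  have hhne : h ≠ 0 := by
    intro h0
    rw [hh, EuclideanDomain.gcd_eq_zero_iff] at h0
    exact hPne h0.1
  have hhF : h * F = P := by
    rw [hF]
    exact EuclideanDomain.mul_div_cancel' hhne hhdvdP
  have hFP : F ∣ P := ⟨h, by rw [← hhF]; ring⟩
  have hFGB : F ∣ G * B := by
    have := hFP
    rw [hsplit, dvd_neg] at this
    exact this
  have hcop : IsCoprime F B := by
    rw [hB]
    refine IsCoprime.prod_right fun k hk => ?_
    obtain ⟨hkr, hkbad⟩ := Finset.mem_filter.mp hk
    push_neg at hkbad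
    obtain ⟨j, hj⟩ := hkbad
    have hdvdA : (X - C (ζ ^ k)) ∣ A := by
      refine dvd_iff_isRoot.mpr ?_
      rw [IsRoot.def, hevalA k]
      exact Finset.prod_eq_zero (Finset.mem_univ j) (by rw [hj, sub_self])
    have hdvdP : (X - C (ζ ^ k)) ∣ P := by
      refine dvd_iff_isRoot.mpr ?_
      rw [IsRoot.def, hP]
      simp [← pow_mul, hpowr k]
    have hdvdh : (X - C (ζ ^ k)) ∣ h := hh ▸ EuclideanDomain.dvd_gcd hdvdP hdvdA
    have hnotF : ¬ (X - C (ζ ^ k)) ∣ F := by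
      intro hdF
      refine not_isUnit_X_sub_C (ζ ^ k) (hPsq _ ?_)
      rw [← hhF]
      exact mul_dvd_mul hdvdh hdF
    exact ((irreducible_X_sub_C (ζ ^ k)).coprime_iff_not_dvd.mpr hnotF).symm
  exact dvd_trans (hcop.dvd_of_dvd_mul_right hFGB) hGdvd
end

section
/- Let r ≥ 2 and a₁,…,aₙ be positive integers with gcd(aⱼ, r) = 1 for all j, and let Δ(t) = ∑_{i=1}^r σ_{r−i} t^i be the Dedekind sum polynomial of type (1/r)(a₁,…,aₙ). Then (1−t)ⁿ·Δ(t) is congruent modulo F = (1−t^r)/(1−t) to a Laurent polynomial with integer coefficients supported in any prescribed window of r−1 consecutive exponents; equivalently, the inverse of ∏ⱼ((1−t^{aⱼ})/(1−t)) modulo F with support in [γ+1, γ+r−1] has integer coefficients, for any γ ∈ ℤ. -/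
section IceCreamAux
open Polynomial Finset

lemma geom_prod (a b : ℕ) : (∑ i ∈ range (a * b), (X : ℤ[X]) ^ i)
      = (∑ i ∈ range a, X ^ i) * (∑ i ∈ range b, X ^ (a * i)) := by
  have hX : (X - 1 : ℤ[X]) ≠ 0 := by
    have := Polynomial.X_sub_C_ne_zero (1 : ℤ)
    simpa using this
  apply mul_right_cancel₀ hX
  have h1 : (∑ i ∈ range b, (X : ℤ[X]) ^ (a * i)) = ∑ i ∈ range b, (X ^ a) ^ i := by
    simp [pow_mul]
  rw [geom_sum_mul, h1, mul_right_comm, geom_sum_mul, mul_comm (X ^ a - 1), geom_sum_mul, pow_mul]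

lemma Fz_dvd_pow (r q : ℕ) :
    (∑ i ∈ range r, (X : ℤ[X]) ^ i) ∣ X ^ (r * q) - 1 := by
  have h1 : (∑ i ∈ range r, (X : ℤ[X]) ^ i) ∣ X ^ r - 1 :=
    ⟨X - 1, (geom_sum_mul X r).symm⟩
  calc (∑ i ∈ range r, (X : ℤ[X]) ^ i) ∣ X ^ r - 1 := h1
    _ ∣ (X ^ r) ^ q - 1 ^ q := by simpa using sub_dvd_pow_sub_pow (X ^ r : ℤ[X]) 1 q
    _ = X ^ (r * q) - 1 := by rw [← pow_mul, one_pow]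

lemma Fz_dvd_geom_sub_one (r q m : ℕ) (hm : m = r * q + 1) :
    (∑ i ∈ range r, (X : ℤ[X]) ^ i) ∣ (∑ i ∈ range m, X ^ i) - 1 := by
  subst hm
  rw [Finset.sum_range_succ]
  have h1 : (∑ i ∈ range (r * q), (X : ℤ[X]) ^ i)
      = (∑ i ∈ range r, X ^ i) * (∑ i ∈ range q, X ^ (r * i)) := geom_prod r q
  have : (∑ i ∈ range (r * q), (X : ℤ[X]) ^ i) + X ^ (r * q) - 1
      = (∑ i ∈ range (r * q), X ^ i) + (X ^ (r * q) - 1) := by ring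
  rw [this, h1]
  exact dvd_add (Dvd.intro _ rfl) (Fz_dvd_pow r q)

lemma exists_mul_mod (r aj : ℕ) (hr : 2 ≤ r) (h : Nat.Coprime aj r) :
    ∃ b q : ℕ, aj * b = r * q + 1 := by
  haveI : NeZero r := ⟨by omega⟩
  have h1 : ((aj : ZMod r)) * (aj : ZMod r)⁻¹ = 1 := ZMod.coe_mul_inv_eq_one aj h
  refine ⟨((aj : ZMod r)⁻¹).val, (aj * ((aj : ZMod r)⁻¹).val) / r, ?_⟩
  have h2 : ((aj * ((aj : ZMod r)⁻¹).val : ℕ) : ZMod r) = ((1 : ℕ) : ZMod r) := by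
    push_cast
    rw [ZMod.natCast_val, ZMod.cast_id]
    simpa using h1
  have h3 : (aj * ((aj : ZMod r)⁻¹).val) % r = 1 % r := (ZMod.natCast_eq_natCast_iff _ _ _).1 h2
  have h4 : 1 % r = 1 := Nat.mod_eq_of_lt (by omega)
  have h5 := Nat.div_add_mod (aj * ((aj : ZMod r)⁻¹).val) r
  omega

lemma ortho (r : ℕ) (hr : 2 ≤ r) (ζ : ℂ) (hprim : IsPrimitiveRoot ζ r) (k l : ℕ)
    (hk : k ∈ Finset.Ico 1 r) (hl : l ∈ Finset.Ico 1 r) :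
    ∑ i ∈ Finset.Icc 1 r, ζ ^ (l * (r - i)) * ζ ^ (k * i) = if l = k then (r : ℂ) else 0 := by
  have hζr : ζ ^ r = 1 := hprim.pow_eq_one
  simp only [Finset.mem_Ico] at hk hl
  by_cases h : l = k
  · subst h
    rw [if_pos rfl]
    have : ∀ i ∈ Finset.Icc 1 r, ζ ^ (l * (r - i)) * ζ ^ (l * i) = 1 := by
      intro i hi
      simp only [Finset.mem_Icc] at hi
      rw [← pow_add, ← Nat.mul_add, Nat.sub_add_cancel hi.2, mul_comm l r, pow_mul, hζr, one_pow]
    rw [Finset.sum_congr rfl this, Finset.sum_const, Nat.card_Icc]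
    simp
  · rw [if_neg h]
    set u := ζ ^ l with hu
    set v := ζ ^ k with hv
    have hune : u ≠ v := fun h' => h (hprim.pow_inj hl.2 hk.2 h')
    have hvu : v - u ≠ 0 := sub_ne_zero.2 (Ne.symm hune)
    have hur : u ^ r = 1 := by rw [hu, ← pow_mul, mul_comm, pow_mul, hζr, one_pow]
    have hvr : v ^ r = 1 := by rw [hv, ← pow_mul, mul_comm, pow_mul, hζr, one_pow]
    have key : (∑ i ∈ Finset.Icc 1 r, ζ ^ (l * (r - i)) * ζ ^ (k * i)) * (v - u) = 0 := by
      rw [Finset.sum_mul]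
      have hIcc : Finset.Icc 1 r = Finset.Ico 1 (r + 1) := by
        rw [← Finset.Ico_add_one_right_eq_Icc]
      rw [hIcc, Finset.sum_Ico_eq_sum_range]
      have hterm : ∀ j ∈ Finset.range (r + 1 - 1),
          ζ ^ (l * (r - (1 + j))) * ζ ^ (k * (1 + j)) * (v - u)
            = (fun t => u ^ (r - t) * v ^ (t + 1)) (j + 1)
              - (fun t => u ^ (r - t) * v ^ (t + 1)) j := by
        intro j hj
        simp only [Finset.mem_range] at hj
        have hj' : j < r := by omega
        have e1 : r - j = (r - (1 + j)) + 1 := by omega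
        have e2 : r - (j + 1) = r - (1 + j) := by omega
        simp only [e1, e2]
        rw [pow_mul, pow_mul, ← hu, ← hv, pow_succ, pow_succ, pow_succ]
        ring
      rw [Finset.sum_congr rfl hterm, Finset.sum_range_sub (fun t => u ^ (r - t) * v ^ (t + 1))]
      simp only [Nat.add_sub_cancel, Nat.sub_self, pow_zero, one_mul, Nat.sub_zero, zero_add,
        pow_one]
      rw [pow_succ, hvr, hur]
      ring
    rcases mul_eq_zero.1 key with h' | h'
    · exact h'
    · exact absurd h' hvu

lemma toLaurent_coeff (p : ℂ[X]) (i : ℤ) :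
    (Polynomial.toLaurent p).coeff i = if 0 ≤ i then p.coeff i.toNat else 0 := by
  rw [LaurentPolynomial.coeff_toLaurent]
  rcases i with n | n
  · rw [show Int.ofNat n = (n : ℤ) from rfl, if_pos (Int.natCast_nonneg n)]
    have := Finsupp.mapDomain_apply (Nat.castEmbedding (R := ℤ)).injective p.toFinsupp.coeff n
    exact this.trans (by cases p; rfl)
  · rw [if_neg (by simp [Int.negSucc_lt_zero])]
    apply Finsupp.mapDomain_notin_range
    rintro ⟨m, hm⟩
    simp only [Int.negSucc_eq, Nat.castEmbedding_apply] at hm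
    omega

lemma mul_T_coeff (p : LaurentPolynomial ℂ) (d m : ℤ) :
    ((p * LaurentPolynomial.T d : LaurentPolynomial ℂ)).coeff m = p.coeff (m - d) := by
  have := AddMonoidAlgebra.coeff_mul_single_apply (R := ℂ) (G := ℤ) p 1 d m
  simpa [sub_eq_add_neg] using this
end IceCreamAux

open Polynomial Finset in
/-- For `aⱼ` coprime to `r`, the polynomial `(1−t)ⁿ·Δ(t)` (with `Δ` the Dedekind
sum polynomial of type `(1/r)(a₁,…,aₙ)`) is congruent modulo `F = (1−t^r)/(1−t)`
to a Laurent polynomial with integer coefficients supported in any prescribed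
window `[γ+1, γ+r−1]` of `r−1` consecutive exponents; this Laurent polynomial is
the inverse of `∏ⱼ((1−t^{aⱼ})/(1−t))` modulo `F` with that support. -/
theorem ice_cream_numerator_integral (r n : ℕ) (hr : 2 ≤ r)
    (a : Fin n → ℕ) (ha : ∀ j, 0 < a j) (hcop : ∀ j, Nat.Coprime (a j) r)
    (ζ : ℂ) (hζ : ζ = Complex.exp (2 * Real.pi * Complex.I / r))
    (σ : ℕ → ℂ)
    (hσ : ∀ i, σ i = (1 / (r : ℂ)) *
      ∑ k ∈ Finset.Ico 1 r, ζ ^ (k * i) / ∏ j, (1 - ζ ^ (k * a j)))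
    (Δ F : Polynomial ℂ)
    (hΔ : Δ = ∑ i ∈ Finset.Icc 1 r, C (σ (r - i)) * X ^ i)
    (hF : F = ∑ i ∈ Finset.range r, X ^ i)
    (γ : ℤ) :
    ∃ B : LaurentPolynomial ℂ,
      (B.coeff.support : Set ℤ) ⊆ Set.Icc (γ + 1) (γ + r - 1) ∧
      (∀ m : ℤ, ∃ z : ℤ, B.coeff m = z) ∧
      F.toLaurent ∣ (((1 - X) ^ n * Δ).toLaurent - B) ∧
      F.toLaurent ∣
        ((∏ j, ∑ i ∈ Finset.range (a j), (X : Polynomial ℂ) ^ i).toLaurent * B - 1) := by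
  classical
  have hr0 : 0 < r := by omega
  haveI : NeZero r := ⟨by omega⟩
  have hprim : IsPrimitiveRoot ζ r := by
    rw [hζ]; exact Complex.isPrimitiveRoot_exp r (by omega)
  -- Integer-side objects
  set Fz : ℤ[X] := ∑ i ∈ range r, X ^ i with hFzdef
  have hgeom : Fz * (X - 1) = X ^ r - 1 := geom_sum_mul X r
  have hFmonic : Fz.Monic := by
    have h1 : ((X : ℤ[X]) - C 1) * Fz = X ^ r - C 1 := by
      rw [mul_comm]; simpa using hgeom
    have h2 : ((X : ℤ[X]) ^ r - C 1).Monic := monic_X_pow_sub_C (1 : ℤ) (by omega)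
    exact (monic_X_sub_C (1 : ℤ)).of_mul_monic_left (h1 ▸ h2)
  have hFznd : Fz.natDegree = r - 1 := by
    have h1 : (((X : ℤ[X]) - C 1) * Fz).natDegree = ((X : ℤ[X]) ^ r - C 1).natDegree := by
      rw [mul_comm, show Fz * ((X : ℤ[X]) - C 1) = X ^ r - C 1 by simpa using hgeom]
    rw [natDegree_mul (X_sub_C_ne_zero 1) hFmonic.ne_zero, natDegree_X_sub_C,
      natDegree_X_pow_sub_C] at h1
    omega
  -- inverses of the geometric factors modulo Fz
  have hinv : ∀ j, ∃ G : ℤ[X], Fz ∣ (∑ i ∈ range (a j), (X : ℤ[X]) ^ i) * G - 1 := by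
    intro j
    obtain ⟨b, q, hbq⟩ := exists_mul_mod r (a j) hr (hcop j)
    exact ⟨∑ i ∈ range b, X ^ (a j * i), by
      rw [← geom_prod (a j) b]
      exact Fz_dvd_geom_sub_one r q _ hbq⟩
  choose G hG using hinv
  set Pz : ℤ[X] := ∏ j, G j with hPzdef
  set Qz : ℤ[X] := ∏ j, ∑ i ∈ range (a j), (X : ℤ[X]) ^ i with hQzdef
  -- Bezout over ℤ
  have hQPz : Fz ∣ Qz * Pz - 1 := by
    have h1 : Qz * Pz = ∏ j, ((∑ i ∈ range (a j), (X : ℤ[X]) ^ i) * G j) := by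
      rw [hQzdef, hPzdef, Finset.prod_mul_distrib]
    rw [h1]
    have : ∀ (s : Finset (Fin n)),
        Fz ∣ (∏ j ∈ s, ((∑ i ∈ range (a j), (X : ℤ[X]) ^ i) * G j)) - 1 := by
      intro s
      induction s using Finset.induction_on with
      | empty => simp
      | insert x s' hx ih =>
        rw [Finset.prod_insert hx]
        set u := (∑ i ∈ range (a x), (X : ℤ[X]) ^ i) * G x
        set w := ∏ j ∈ s', ((∑ i ∈ range (a j), (X : ℤ[X]) ^ i) * G j)
        have : u * w - 1 = (u - 1) * w + (w - 1) := by ring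
        rw [this]
        exact dvd_add (Dvd.dvd.mul_right (hG x) w) ih
    exact this univ
  obtain ⟨H, hH⟩ := hQPz
  -- the shift constants
  set k0 : ℕ := γ.natAbs + 1 with hk0def
  have hck : (0 : ℤ) ≤ (r : ℤ) * k0 - (γ + 1) := by
    have h1 : (γ : ℤ) ≤ γ.natAbs := Int.le_natAbs
    have h2 : (k0 : ℤ) = γ.natAbs + 1 := by exact_mod_cast rfl
    nlinarith [Int.natCast_nonneg (k0 : ℕ), show (2:ℤ) ≤ r by exact_mod_cast hr]
  set c : ℕ := ((r : ℤ) * k0 - (γ + 1)).toNat with hcdef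
  have hc : (c : ℤ) = (r : ℤ) * k0 - (γ + 1) := Int.toNat_of_nonneg hck
  set Nz : ℤ[X] := (X ^ c * Pz) %ₘ Fz with hNzdef
  -- maps to ℂ and Laurent polynomials
  set φ : ℤ[X] →+* ℂ[X] := mapRingHom (Int.castRingHom ℂ) with hφdef
  have hφF : φ Fz = F := by
    rw [hF, hFzdef, hφdef]
    simp [Polynomial.map_sum]
  have hφQ : φ Qz = ∏ j, ∑ i ∈ Finset.range (a j), (X : Polynomial ℂ) ^ i := by
    rw [hQzdef, hφdef]
    simp [Polynomial.map_sum, Polynomial.map_prod]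
  -- quotient ring machinery
  set IL : Ideal (LaurentPolynomial ℂ) := Ideal.span {F.toLaurent} with hILdef
  have hdvd_iff : ∀ x : LaurentPolynomial ℂ,
      F.toLaurent ∣ x ↔ Ideal.Quotient.mk IL x = 0 := by
    intro x
    rw [Ideal.Quotient.eq_zero_iff_mem, hILdef, Ideal.mem_span_singleton]
  have hπF : Ideal.Quotient.mk IL (Polynomial.toLaurent (φ Fz)) = 0 := by
    rw [hφF, ← hdvd_iff]
  have hψdvd : ∀ x y : ℤ[X], Fz ∣ x - y →
      Ideal.Quotient.mk IL (Polynomial.toLaurent (φ x))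
        = Ideal.Quotient.mk IL (Polynomial.toLaurent (φ y)) := by
    intro x y ⟨w, hw⟩
    have h1 : Polynomial.toLaurent (φ x) - Polynomial.toLaurent (φ y)
        = Polynomial.toLaurent (φ Fz) * Polynomial.toLaurent (φ w) := by
      rw [← map_mul, ← map_mul, ← hw, map_sub, map_sub]
    have h2 : F.toLaurent ∣ Polynomial.toLaurent (φ x) - Polynomial.toLaurent (φ y) := by
      rw [h1, hφF]; exact Dvd.intro _ rfl
    rwa [hdvd_iff, map_sub, sub_eq_zero] at h2
  -- key quotient facts
  have hπQP : Ideal.Quotient.mk IL (Polynomial.toLaurent (φ (Qz * Pz))) = 1 := by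
    have := hψdvd (Qz * Pz) 1 ⟨H, by rw [← hH]⟩
    rwa [map_one, map_one] at this
  have hπT : Ideal.Quotient.mk IL (Polynomial.toLaurent (φ (X ^ (r * k0)))) = 1 := by
    have := hψdvd (X ^ (r * k0)) 1 (by simpa using Fz_dvd_pow r k0)
    rwa [map_one, map_one] at this
  have hinverse : F.toLaurent ∣
      ((∏ j, ∑ i ∈ Finset.range (a j), (X : Polynomial ℂ) ^ i).toLaurent
        * (Polynomial.toLaurent (φ Nz) * LaurentPolynomial.T (γ + 1)) - 1) := by
    rw [hdvd_iff, map_sub, map_mul, map_one, ← hφQ]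
    have hπN : Ideal.Quotient.mk IL (Polynomial.toLaurent (φ Nz))
        = Ideal.Quotient.mk IL (Polynomial.toLaurent (φ (X ^ c * Pz))) := by
      apply hψdvd
      rw [hNzdef, modByMonic_eq_sub_mul_div _ Fz]
      exact ⟨-((X ^ c * Pz) /ₘ Fz), by ring⟩
    have hXc : Polynomial.toLaurent (φ (X ^ c : ℤ[X])) = LaurentPolynomial.T (c : ℤ) := by
      rw [hφdef]; simp [Polynomial.toLaurent_X_pow]
    have hXrk : Polynomial.toLaurent (φ (X ^ (r * k0) : ℤ[X]))
        = LaurentPolynomial.T ((r * k0 : ℕ) : ℤ) := by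
      rw [hφdef]; simp [Polynomial.toLaurent_X_pow]
    have hTsplit : (LaurentPolynomial.T ((r * k0 : ℕ) : ℤ) : LaurentPolynomial ℂ)
        = LaurentPolynomial.T (c : ℤ) * LaurentPolynomial.T (γ + 1) := by
      rw [← LaurentPolynomial.T_add]
      congr 1
      rw [hc]
      push_cast
      ring
    have hQN : Ideal.Quotient.mk IL (Polynomial.toLaurent (φ Qz) * (Polynomial.toLaurent (φ Nz)
        * LaurentPolynomial.T (γ + 1))) = 1 := by
      rw [map_mul, map_mul, hπN]
      calc Ideal.Quotient.mk IL (Polynomial.toLaurent (φ Qz))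
            * (Ideal.Quotient.mk IL (Polynomial.toLaurent (φ (X ^ c * Pz)))
              * Ideal.Quotient.mk IL (LaurentPolynomial.T (γ + 1)))
          = Ideal.Quotient.mk IL (Polynomial.toLaurent (φ (Qz * Pz)))
            * Ideal.Quotient.mk IL (LaurentPolynomial.T (c : ℤ)
              * LaurentPolynomial.T (γ + 1)) := by
            simp only [map_mul, hXc]
            ring
        _ = 1 := by
            rw [← hTsplit, hπQP, ← hXrk, hπT, one_mul]
    rw [← map_mul, hQN, sub_self]

  -- analytic input: evaluation at roots of unity
  set D : ℂ[X] := ∏ j, (1 - X ^ (a j)) with hDdef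
  have hDl_ne : ∀ l ∈ Finset.Ico 1 r, (∏ j, (1 - ζ ^ (l * a j))) ≠ 0 := by
    intro l hl
    simp only [Finset.mem_Ico] at hl
    rw [Finset.prod_ne_zero_iff]
    intro j _
    rw [sub_ne_zero]
    intro h1
    have h2 : ζ ^ (l * a j) = 1 := h1.symm
    rw [hprim.pow_eq_one_iff_dvd] at h2
    have h3 : r ∣ l := (hcop j).symm.dvd_of_dvd_mul_right h2
    have := Nat.le_of_dvd (by omega) h3
    omega
  have hevalΔ : ∀ k ∈ Finset.Ico 1 r, Δ.eval (ζ ^ k) = 1 / ∏ j, (1 - ζ ^ (k * a j)) := by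
    intro k hk
    have hrC : (r : ℂ) ≠ 0 := Nat.cast_ne_zero.2 (by omega)
    rw [hΔ, eval_finset_sum]
    simp only [eval_mul, eval_C, eval_pow, eval_X]
    have h1 : ∀ i ∈ Finset.Icc 1 r, σ (r - i) * (ζ ^ k) ^ i
        = ∑ l ∈ Finset.Ico 1 r, (1 / (r : ℂ)) * ((1 / ∏ j, (1 - ζ ^ (l * a j)))
            * (ζ ^ (l * (r - i)) * ζ ^ (k * i))) := by
      intro i hi
      rw [hσ (r - i), ← pow_mul ζ k i, Finset.mul_sum, Finset.sum_mul]
      apply Finset.sum_congr rfl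
      intro l hl
      field_simp
    rw [Finset.sum_congr rfl h1, Finset.sum_comm]
    have h2 : ∀ l ∈ Finset.Ico 1 r,
        (∑ i ∈ Finset.Icc 1 r, (1 / (r : ℂ)) * ((1 / ∏ j, (1 - ζ ^ (l * a j)))
            * (ζ ^ (l * (r - i)) * ζ ^ (k * i))))
        = (1 / (r : ℂ)) * ((1 / ∏ j, (1 - ζ ^ (l * a j)))
            * (if l = k then (r : ℂ) else 0)) := by
      intro l hl
      rw [← Finset.mul_sum, ← Finset.mul_sum, ortho r hr ζ hprim k l hk hl]
    rw [Finset.sum_congr rfl h2, Finset.sum_eq_single_of_mem k hk]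
    · rw [if_pos rfl]
      field_simp
    · intro l _ hlk
      rw [if_neg hlk, mul_zero, mul_zero]
  have hevalD : ∀ k : ℕ, D.eval (ζ ^ k) = ∏ j, (1 - ζ ^ (k * a j)) := by
    intro k
    rw [hDdef, eval_prod]
    apply Finset.prod_congr rfl
    intro j _
    rw [eval_sub, eval_one, eval_pow, eval_X, ← pow_mul]
  have hpair : Set.Pairwise ↑(Polynomial.nthRootsFinset r (1 : ℂ))
      (Function.onFun IsCoprime fun η : ℂ => (X : ℂ[X]) - C η) :=
    (Polynomial.pairwise_coprime_X_sub_C (Function.injective_id (α := ℂ))).set_pairwise _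
  have hroot : ∀ η ∈ Polynomial.nthRootsFinset r (1 : ℂ),
      ((X : ℂ[X]) - C η) ∣ (X - 1) * (D * Δ - 1) := by
    intro η hη
    have hη' : η ^ r = 1 := (Polynomial.mem_nthRootsFinset hr0 (1 : ℂ)).1 hη
    by_cases h1 : η = 1
    · subst h1
      rw [map_one]
      exact Dvd.dvd.mul_right dvd_rfl _
    · obtain ⟨k, hklt, hζk⟩ := hprim.eq_pow_of_pow_eq_one hη'
      have hk0' : k ≠ 0 := by
        rintro rfl
        rw [pow_zero] at hζk
        exact h1 hζk.symm
      have hkmem : k ∈ Finset.Ico 1 r := Finset.mem_Ico.2 ⟨by omega, hklt⟩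
      apply dvd_mul_of_dvd_right
      rw [dvd_iff_isRoot]
      show Polynomial.eval η (D * Δ - 1) = 0
      rw [← hζk, eval_sub, eval_mul, eval_one, hevalD k, hevalΔ k hkmem,
        mul_one_div, div_self (hDl_ne k hkmem), sub_self]
  have hX1 : ((X : ℂ[X]) - 1) ≠ 0 := by
    have := Polynomial.X_sub_C_ne_zero (1 : ℂ)
    simpa using this
  have hanalytic : F ∣ D * Δ - 1 := by
    have hXr : ((X : ℂ[X]) ^ r - 1) ∣ (X - 1) * (D * Δ - 1) := by
      rw [Polynomial.X_pow_sub_one_eq_prod hr0 hprim]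
      exact Finset.prod_dvd_of_coprime hpair hroot
    obtain ⟨s, hs⟩ := hXr
    refine ⟨s, mul_left_cancel₀ hX1 ?_⟩
    rw [hs]
    have hgc : ((X : ℂ[X]) ^ r - 1) = (X - 1) * F := by
      rw [hF, mul_comm]
      exact (geom_sum_mul X r).symm
    rw [hgc]
    ring
  have hcopr : IsCoprime (Polynomial.toLaurent F)
      ((∏ j, ∑ i ∈ Finset.range (a j), (X : Polynomial ℂ) ^ i).toLaurent) := by
    refine ⟨-(Polynomial.toLaurent (φ H)), Polynomial.toLaurent (φ Pz), ?_⟩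
    have h1 := congrArg (fun p => Polynomial.toLaurent (φ p)) hH
    simp only [map_sub, map_mul, map_one] at h1
    rw [hφF] at h1
    rw [← hφQ]
    linear_combination h1
  have hDQ : (∏ j, ∑ i ∈ Finset.range (a j), (X : ℂ[X]) ^ i) * (1 - X) ^ n = D := by
    rw [hDdef]
    have h1 : ((1 : ℂ[X]) - X) ^ n = ∏ _j : Fin n, (1 - X) := by
      rw [Finset.prod_const, Finset.card_univ, Fintype.card_fin]
    rw [h1, ← Finset.prod_mul_distrib]
    apply Finset.prod_congr rfl
    intro j _
    have := geom_sum_mul (X : ℂ[X]) (a j)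
    linear_combination -this
  -- the Laurent polynomial B
  refine ⟨Polynomial.toLaurent (φ Nz) * LaurentPolynomial.T (γ + 1), ?_, ?_, ?_, ?_⟩
  · -- support condition
    intro m hm
    simp only [Finset.mem_coe, Finsupp.mem_support_iff] at hm
    rw [mul_T_coeff, toLaurent_coeff] at hm
    by_cases hge : 0 ≤ m - (γ + 1)
    · rw [if_pos hge] at hm
      have he : (φ Nz).coeff (m - (γ + 1)).toNat ≠ 0 := hm
      have h1 : (m - (γ + 1)).toNat ≤ (φ Nz).natDegree := le_natDegree_of_ne_zero he
      have hNz0 : Nz ≠ 0 := by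
        rintro h0
        rw [h0] at he
        simp [hφdef] at he
      have h2 : (φ Nz).natDegree ≤ Nz.natDegree := natDegree_map_le
      have h3 : Nz.natDegree < r - 1 := by
        have := natDegree_lt_natDegree hNz0 (degree_modByMonic_lt (X ^ c * Pz) hFmonic)
        omega
      have h4 : ((m - (γ + 1)).toNat : ℤ) = m - (γ + 1) := Int.toNat_of_nonneg hge
      have h5 : (m - (γ + 1)).toNat ≤ r - 2 := by omega
      have h6 : ((m - (γ + 1)).toNat : ℤ) ≤ (r : ℤ) - 2 := by
        calc ((m - (γ + 1)).toNat : ℤ) ≤ ((r - 2 : ℕ) : ℤ) := by exact_mod_cast h5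
          _ ≤ (r : ℤ) - 2 := by push_cast; omega
      constructor
      · omega
      · omega
    · rw [if_neg hge] at hm
      exact absurd rfl hm
  · -- integrality
    intro m
    rw [mul_T_coeff, toLaurent_coeff]
    by_cases hge : 0 ≤ m - (γ + 1)
    · refine ⟨Nz.coeff (m - (γ + 1)).toNat, ?_⟩
      rw [if_pos hge, hφdef]
      simp [coeff_map]
    · exact ⟨0, by rw [if_neg hge]; simp⟩
  · -- congruence with (1-X)^n * Δ
    have hQZdvd : F.toLaurent ∣
        (∏ j, ∑ i ∈ Finset.range (a j), (X : Polynomial ℂ) ^ i).toLaurent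
          * (((1 - X) ^ n * Δ).toLaurent
              - Polynomial.toLaurent (φ Nz) * LaurentPolynomial.T (γ + 1)) := by
      have e1 : (∏ j, ∑ i ∈ Finset.range (a j), (X : Polynomial ℂ) ^ i).toLaurent
            * (((1 - X) ^ n * Δ).toLaurent
              - Polynomial.toLaurent (φ Nz) * LaurentPolynomial.T (γ + 1))
          = ((D * Δ).toLaurent - 1)
            - ((∏ j, ∑ i ∈ Finset.range (a j), (X : Polynomial ℂ) ^ i).toLaurent
              * (Polynomial.toLaurent (φ Nz) * LaurentPolynomial.T (γ + 1)) - 1) := by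
        simp only [← hDQ, map_mul]
        ring
      rw [e1]
      apply dvd_sub _ hinverse
      have := map_dvd (Polynomial.toLaurent (R := ℂ)) hanalytic
      rwa [map_sub, map_one] at this
    exact hcopr.dvd_of_dvd_mul_left hQZdvd
  · -- B inverts the product modulo F
    exact hinverse
end

section
/- Let r ≥ 2 and 0 < a < r with gcd(a,r) = 1, and let 0 < b < r satisfy a·b ≡ 1 (mod r). Then the Dedekind sums of the surface type (1/r)(a, r−a) are given by σᵢ = (r²−1)/(12r) − b̄ᵢ(r−b̄ᵢ)/(2r), where b̄ᵢ denotes the least nonnegative residue of b·i modulo r. -/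
open Finset

private lemma sum_id_cast (n : ℕ) : ∑ j ∈ range n, (j : ℂ) = n * (n - 1) / 2 := by
  induction n with
  | zero => simp
  | succ n ih => rw [Finset.sum_range_succ, ih]; push_cast; ring

private lemma sum_sq_cast (n : ℕ) : ∑ j ∈ range n, (j : ℂ) ^ 2 = n * (n - 1) * (2 * n - 1) / 6 := by
  induction n with
  | zero => simp
  | succ n ih => rw [Finset.sum_range_succ, ih]; push_cast; ring

private lemma weighted_geom (x : ℂ) (n : ℕ) :
    (x - 1) * ∑ j ∈ range n, (j : ℂ) * x ^ j
      = ((n : ℂ) - 1) * x ^ n - (∑ j ∈ range n, x ^ j) + 1 := by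
  induction n with
  | zero => simp
  | succ n ih =>
    rw [Finset.sum_range_succ, Finset.sum_range_succ (fun j => x ^ j), mul_add, ih]
    push_cast; ring

private lemma inv_one_sub (r : ℕ) (hr : 0 < r) (x : ℂ) (hx1 : x ≠ 1) (hxr : x ^ r = 1) :
    (1 - x)⁻¹ = -(∑ j ∈ range r, (j : ℂ) * x ^ j) / r := by
  have hg : ∑ j ∈ range r, x ^ j = 0 := by
    rw [geom_sum_eq hx1, hxr]; simp
  have h := weighted_geom x r
  rw [hxr, hg] at h
  have h2 : (x - 1) * (∑ j ∈ range r, (j : ℂ) * x ^ j) = r := by linear_combination h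
  have hx : (1 : ℂ) - x ≠ 0 := sub_ne_zero.mpr (Ne.symm hx1)
  have hr' : (r : ℂ) ≠ 0 := Nat.cast_ne_zero.mpr hr.ne'
  field_simp
  linear_combination -h2

private lemma sum_mod_cast (r m : ℕ) (hm : m < r) :
    ∑ j ∈ range r, (j : ℂ) * (((j + m) % r : ℕ) : ℂ)
      = (r : ℂ) * (r - 1) * (2 * r - 1) / 6 + m * r * (r - 1) / 2
        - r * m * (2 * r - m - 1) / 2 := by
  have h1 : ∑ j ∈ range (r - m), (j : ℂ) * (((j + m) % r : ℕ) : ℂ)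
      = ∑ j ∈ range (r - m), ((j : ℂ) ^ 2 + m * j) := by
    refine Finset.sum_congr rfl fun j hj => ?_
    have hj' : j + m < r := by have := Finset.mem_range.mp hj; omega
    rw [Nat.mod_eq_of_lt hj']
    push_cast; ring
  have h2 : ∑ j ∈ Ico (r - m) r, (j : ℂ) * (((j + m) % r : ℕ) : ℂ)
      = ∑ j ∈ Ico (r - m) r, ((j : ℂ) ^ 2 + (m : ℂ) * j - r * j) := by
    refine Finset.sum_congr rfl fun j hj => ?_
    have hj' := Finset.mem_Ico.mp hj
    have hge : r ≤ j + m := by omega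
    have hlt : j + m - r < r := by omega
    have hmod : (j + m) % r = j + m - r := by
      rw [Nat.mod_eq_sub_mod hge, Nat.mod_eq_of_lt hlt]
    rw [hmod]
    have hcast : ((j + m - r : ℕ) : ℂ) = (j : ℂ) + m - r := by
      push_cast [Nat.cast_sub hge]; ring
    rw [hcast]; ring
  have hcat : ∑ j ∈ range r, (j : ℂ) * (((j + m) % r : ℕ) : ℂ)
      = (∑ j ∈ range (r - m), (j : ℂ) * (((j + m) % r : ℕ) : ℂ))
        + ∑ j ∈ Ico (r - m) r, (j : ℂ) * (((j + m) % r : ℕ) : ℂ) := by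
    rw [Finset.range_eq_Ico, ← Finset.sum_Ico_consecutive _ (Nat.zero_le (r - m)) (Nat.sub_le r m),
      ← Finset.range_eq_Ico]
  have hIco : ∀ f : ℕ → ℂ, ∑ j ∈ Ico (r - m) r, f j
      = (∑ j ∈ range r, f j) - ∑ j ∈ range (r - m), f j := by
    intro f
    rw [Finset.sum_Ico_eq_sub _ (Nat.sub_le r m)]
  rw [hcat, h1, h2, hIco]
  simp only [Finset.sum_add_distrib, Finset.sum_sub_distrib, ← Finset.mul_sum]
  simp only [sum_id_cast, sum_sq_cast]
  have hrm : ((r - m : ℕ) : ℂ) = (r : ℂ) - m := by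
    push_cast [Nat.cast_sub hm.le]; ring
  rw [hrm]
  ring

open Finset in
/-- For a surface orbifold point of type `(1/r)(a, r−a)` with `gcd(a,r)=1` and
`b = a⁻¹ mod r`, the Dedekind sums are
`σᵢ = (r²−1)/(12r) − b̄ᵢ(r−b̄ᵢ)/(2r)`, where `b̄ᵢ = (b·i) mod r`. -/
theorem dedekind_sums_surface_type (r a b : ℕ) (hr : 2 ≤ r)
    (ha0 : 0 < a) (har : a < r) (hcop : Nat.Coprime a r)
    (hb0 : 0 < b) (hbr : b < r) (hab : a * b ≡ 1 [MOD r])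
    (ζ : ℂ) (hζ : ζ = Complex.exp (2 * Real.pi * Complex.I / r))
    (σ : ℕ → ℂ)
    (hσ : ∀ i, σ i = (1 / (r : ℂ)) *
      ∑ k ∈ Finset.Ico 1 r,
        ζ ^ (k * i) / ((1 - ζ ^ (k * a)) * (1 - ζ ^ (k * (r - a))))) :
    ∀ i : ℕ, σ i = ((r : ℂ) ^ 2 - 1) / (12 * r)
      - ((b * i) % r : ℕ) * ((r : ℂ) - ((b * i) % r : ℕ)) / (2 * r) := by
  intro i
  have hr0 : 0 < r := by omega
  have hrC : (r : ℂ) ≠ 0 := Nat.cast_ne_zero.mpr hr0.ne'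
  have hζprim : IsPrimitiveRoot ζ r := by
    rw [hζ]; exact Complex.isPrimitiveRoot_exp r hr0.ne'
  have hζr : ζ ^ r = 1 := hζprim.pow_eq_one
  set m : ℕ := b * i % r with hm
  have hm_lt : m < r := Nat.mod_lt _ hr0
  have hcop' : Nat.Coprime (r - a) r := by
    have h1 : Nat.Coprime (r - a) a := (Nat.coprime_sub_self_left har.le).mpr hcop.symm
    have h2 : a + (r - a) = r := by omega
    have h3 : Nat.Coprime (r - a) (a + (r - a)) := Nat.coprime_add_self_right.mpr h1
    rwa [h2] at h3
  have hne1 : ∀ c k : ℕ, Nat.Coprime c r → 1 ≤ k → k < r → ζ ^ (k * c) ≠ 1 := by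
    intro c k hc hk1 hkr h
    have hd : r ∣ k * c := (hζprim.pow_eq_one_iff_dvd _).mp h
    have hdk : r ∣ k := Nat.Coprime.dvd_of_dvd_mul_right hc.symm hd
    have := Nat.le_of_dvd (by omega) hdk
    omega
  have hpow : ∀ N : ℕ, (ζ ^ N) ^ r = 1 := by
    intro N; rw [← pow_mul, mul_comm, pow_mul, hζr, one_pow]
  have sum_pow : ∀ N : ℕ, ∑ k ∈ Ico 1 r, (ζ ^ N) ^ k = (if r ∣ N then (r : ℂ) else 0) - 1 := by
    intro N
    have h0 : ∑ k ∈ range r, (ζ ^ N) ^ k = if r ∣ N then (r : ℂ) else 0 := by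
      by_cases h : r ∣ N
      · have h1 : ζ ^ N = 1 := (hζprim.pow_eq_one_iff_dvd N).mpr h
        simp [h1, h]
      · have hne : ζ ^ N ≠ 1 := fun he => h ((hζprim.pow_eq_one_iff_dvd N).mp he)
        rw [geom_sum_eq hne, hpow N]
        simp [h]
    rw [Finset.range_eq_Ico, Finset.sum_eq_sum_Ico_succ_bot hr0] at h0
    simp only [pow_zero] at h0
    linear_combination h0
  haveI : NeZero r := ⟨hr0.ne'⟩
  have habC : (a : ZMod r) * b = 1 := by
    have h := (ZMod.natCast_eq_natCast_iff (a * b) 1 r).mpr hab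
    push_cast at h
    exact h
  have hinj : ∀ u v : ℕ, u < r → v < r → (u : ZMod r) = v → u = v := by
    intro u v hu hv h
    have := congrArg ZMod.val h
    rwa [ZMod.val_cast_of_lt hu, ZMod.val_cast_of_lt hv] at this
  have hdvd_iff : ∀ j l : ℕ, l < r → (r ∣ i + a * j + (r - a) * l ↔ l = (j + m) % r) := by
    intro j l hl
    have hra : ((r - a : ℕ) : ZMod r) = -(a : ZMod r) := by
      have h1 : ((r - a : ℕ) : ZMod r) = (r : ZMod r) - a := by
        rw [Nat.cast_sub har.le]
      rw [h1, ZMod.natCast_self]; ring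
    have hLcast : (((j + m) % r : ℕ) : ZMod r) = (b : ZMod r) * i + j := by
      rw [ZMod.natCast_mod, Nat.cast_add, hm, ZMod.natCast_mod, Nat.cast_mul]; ring
    rw [← ZMod.natCast_eq_zero_iff]
    push_cast [hra]
    constructor
    · intro h
      have h2 : (l : ZMod r) = (b : ZMod r) * i + j := by
        linear_combination (-(b : ZMod r)) * h + ((j : ZMod r) - l) * habC
      exact hinj l ((j + m) % r) hl (Nat.mod_lt _ hr0) (by rw [h2, hLcast])
    · intro h
      have h2 : (l : ZMod r) = (b : ZMod r) * i + j := by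
        rw [h, hLcast]
      linear_combination (-(a : ZMod r)) * h2 - (i : ZMod r) * habC
  have hterm : ∀ k ∈ Ico 1 r,
      ζ ^ (k * i) / ((1 - ζ ^ (k * a)) * (1 - ζ ^ (k * (r - a))))
        = (1 / (r : ℂ) ^ 2) *
          ∑ j ∈ range r, ∑ l ∈ range r,
            ((j : ℂ) * l) * (ζ ^ (i + a * j + (r - a) * l)) ^ k := by
    intro k hk
    obtain ⟨hk1, hk2⟩ := Finset.mem_Ico.mp hk
    have hka := hne1 a k hcop hk1 hk2
    have hkb := hne1 (r - a) k hcop' hk1 hk2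
    have expand : ∑ j ∈ range r, ∑ l ∈ range r,
        ((j : ℂ) * l) * (ζ ^ (i + a * j + (r - a) * l)) ^ k
        = (∑ j ∈ range r, (j : ℂ) * (ζ ^ (k * a)) ^ j)
          * (∑ l ∈ range r, (l : ℂ) * (ζ ^ (k * (r - a))) ^ l) * ζ ^ (k * i) := by
      rw [Finset.sum_mul_sum, Finset.sum_mul]
      refine Finset.sum_congr rfl fun j _ => ?_
      rw [Finset.sum_mul]
      refine Finset.sum_congr rfl fun l _ => ?_
      rw [← pow_mul, ← pow_mul, ← pow_mul]
      rw [show (i + a * j + (r - a) * l) * k = k * a * j + (k * (r - a) * l + k * i) by ring,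
        pow_add, pow_add]
      ring
    rw [div_eq_mul_inv, mul_inv, inv_one_sub r hr0 _ hka (hpow _),
      inv_one_sub r hr0 _ hkb (hpow _), expand]
    field_simp
  rw [hσ i, Finset.sum_congr rfl hterm, ← Finset.mul_sum]
  have hT : ∑ k ∈ Ico 1 r, ∑ j ∈ range r, ∑ l ∈ range r,
      ((j : ℂ) * l) * (ζ ^ (i + a * j + (r - a) * l)) ^ k
      = ∑ j ∈ range r, ∑ l ∈ range r,
        ((j : ℂ) * l) * ((if r ∣ (i + a * j + (r - a) * l) then (r : ℂ) else 0) - 1) := by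
    rw [Finset.sum_comm]
    refine Finset.sum_congr rfl fun j _ => ?_
    rw [Finset.sum_comm]
    refine Finset.sum_congr rfl fun l _ => ?_
    rw [← Finset.mul_sum, sum_pow]
  have hL : ∀ j ∈ range r, ∑ l ∈ range r,
      ((j : ℂ) * l) * ((if r ∣ (i + a * j + (r - a) * l) then (r : ℂ) else 0) - 1)
      = (j : ℂ) * ((r : ℂ) * (((j + m) % r : ℕ) : ℂ) - (r : ℂ) * ((r : ℂ) - 1) / 2) := by
    intro j _
    have hcongr : ∀ l ∈ range r,
        ((j : ℂ) * l) * ((if r ∣ (i + a * j + (r - a) * l) then (r : ℂ) else 0) - 1)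
        = ((j : ℂ) * l) * ((if l = (j + m) % r then (r : ℂ) else 0) - 1) := by
      intro l hl
      rw [if_congr (hdvd_iff j l (Finset.mem_range.mp hl)) rfl rfl]
    rw [Finset.sum_congr rfl hcongr]
    have h1 : ∑ l ∈ range r, ((j : ℂ) * l) * ((if l = (j + m) % r then (r : ℂ) else 0) - 1)
        = (∑ l ∈ range r, (if l = (j + m) % r then (j : ℂ) * l * r else 0))
          - ∑ l ∈ range r, (j : ℂ) * l := by
      rw [← Finset.sum_sub_distrib]
      refine Finset.sum_congr rfl fun l _ => ?_
      by_cases h : l = (j + m) % r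
      · simp only [if_pos h]; ring
      · simp only [if_neg h]; ring
    rw [h1, Finset.sum_ite_eq' (range r) ((j + m) % r) (fun l => (j : ℂ) * l * r),
      if_pos (Finset.mem_range.mpr (Nat.mod_lt _ hr0)), ← Finset.mul_sum, sum_id_cast]
    ring
  have hJ : ∀ j ∈ range r,
      (j : ℂ) * ((r : ℂ) * (((j + m) % r : ℕ) : ℂ) - (r : ℂ) * ((r : ℂ) - 1) / 2)
      = (r : ℂ) * ((j : ℂ) * (((j + m) % r : ℕ) : ℂ))
        - ((r : ℂ) * ((r : ℂ) - 1) / 2) * j := by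
    intro j _; ring
  rw [hT, Finset.sum_congr rfl hL, Finset.sum_congr rfl hJ, Finset.sum_sub_distrib,
    ← Finset.mul_sum, ← Finset.mul_sum, sum_id_cast, sum_mod_cast r m hm_lt]
  field_simp
  ring
end
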